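/- arXiv:2304.12552 — 3 statements merged into one kernel-verified Lean document; each statement's English description precedes it below -/
import Mathlib

section
/- Let n ≥ 2, α > 0, and let ω be a majorant. Then there exists a constant M > 0 such that for every x in the open unit ball B^n with x ≠ 0, ∫_{S^{n-1}} ω(|x − ζ|)/|x − ζ|^{n+α} dσ(ζ) ≤ M ω(1 − |x|)/(1 − |x|)^{1+α}. -/
open MeasureTheory Real Filter Metric

/-- The rotation-invariant Borel probability measure on the unit sphere
`S^{n-1} ⊆ ℝ^n` (normalized so that the total mass is 1). -/
noncomputable def sphereMeasure (n : ℕ) :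
    Measure (Metric.sphere (0 : EuclideanSpace ℝ (Fin n)) 1) :=
  (((volume : Measure (EuclideanSpace ℝ (Fin n))).toSphere Set.univ)⁻¹ •
    (volume : Measure (EuclideanSpace ℝ (Fin n))).toSphere)

/-- The constant `C_α = Γ((n+α)/2)Γ(1+α/2)/(Γ(n/2)Γ(1+α))`. -/
noncomputable def Cconst (n : ℕ) (α : ℝ) : ℝ :=
  Real.Gamma ((n + α) / 2) * Real.Gamma (1 + α / 2) /
    (Real.Gamma (n / 2) * Real.Gamma (1 + α))

/-- The Poisson type kernel `𝐏_α(x,ζ) = C_α (1−|x|²)^{1+α}/|x−ζ|^{n+α}`. -/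
noncomputable def poissonKer (n : ℕ) (α : ℝ) (x : EuclideanSpace ℝ (Fin n))
    (ζ : Metric.sphere (0 : EuclideanSpace ℝ (Fin n)) 1) : ℝ :=
  Cconst n α * (1 - ‖x‖ ^ 2) ^ (1 + α) /
    ‖x - (ζ : EuclideanSpace ℝ (Fin n))‖ ^ ((n : ℝ) + α)

/-- A majorant: a continuous increasing `ω : [0,∞) → [0,∞)` with `ω 0 = 0`
such that `ω t / t` is non-increasing on `(0,∞)`. -/
def IsMajorant (ω : ℝ → ℝ) : Prop :=
  ContinuousOn ω (Set.Ici 0) ∧ MonotoneOn ω (Set.Ici 0) ∧ ω 0 = 0 ∧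
    (∀ t, 0 ≤ t → 0 ≤ ω t) ∧ AntitoneOn (fun t => ω t / t) (Set.Ioi 0)

/-- A fast majorant: a majorant satisfying `∫₀^λ ω(t)/t dt ≤ M ω(λ)` for all
`0 < λ < λ₀`, for some `λ₀ > 0` and `M > 0`. -/
def IsFastMajorant (ω : ℝ → ℝ) : Prop :=
  IsMajorant ω ∧ ∃ lam₀ > (0 : ℝ), ∃ M > (0 : ℝ), ∀ lam : ℝ, 0 < lam → lam < lam₀ →
    ∫⁻ t in Set.Ioc (0 : ℝ) lam, ENNReal.ofReal (ω t / t) ≤ ENNReal.ofReal (M * ω lam)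

section J1Aux

open Pointwise

lemma j1_abs_coord_le_norm {n : ℕ} (z : EuclideanSpace ℝ (Fin n)) (i : Fin n) : |z i| ≤ ‖z‖ := by
  rw [EuclideanSpace.norm_eq, ← Real.sqrt_sq_eq_abs]
  apply Real.sqrt_le_sqrt
  calc z i ^ 2 = ‖z i‖ ^ 2 := by rw [Real.norm_eq_abs, sq_abs]
  _ ≤ ∑ j, ‖z j‖ ^ 2 := Finset.single_le_sum (f := fun j => ‖z j‖ ^ 2) (fun j _ => by positivity) (Finset.mem_univ i)

lemma j1_cone_volume_le {n : ℕ} (hn : 1 ≤ n) {e : EuclideanSpace ℝ (Fin n)} (he : ‖e‖ = 1)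
    {r : ℝ} (hr : 0 < r) :
    volume (Set.Ioo (0:ℝ) 1 •
      (Subtype.val '' {ζ : Metric.sphere (0 : EuclideanSpace ℝ (Fin n)) 1 |
        ‖(ζ : EuclideanSpace ℝ (Fin n)) - e‖ < r})) ≤
      ENNReal.ofReal (2^n * r^(n-1)) := by
  haveI : NeZero n := ⟨by omega⟩
  have hcard : Module.finrank ℝ (EuclideanSpace ℝ (Fin n)) = Fintype.card (Fin n) := by
    simp [finrank_euclideanSpace]
  have horth : Orthonormal ℝ (Set.restrict ({0} : Set (Fin n)) (fun _ : Fin n => e)) := by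
    constructor
    · intro i; exact he
    · intro i j hij
      exact absurd (Subsingleton.elim i j) hij
  obtain ⟨b, hb⟩ := horth.exists_orthonormalBasis_extension_of_card_eq hcard
  have hb0 : b 0 = e := hb 0 rfl
  set m := min r 1 with hm
  have hm0 : 0 < m := lt_min hr one_pos
  set c : Fin n → ℝ := fun i => if i = 0 then 1 else m with hc
  set Box : Set (Fin n → ℝ) := Set.univ.pi (fun i => Set.Icc (-(c i)) (c i)) with hBox
  have hBoxm : MeasurableSet Box := MeasurableSet.univ_pi (fun i => measurableSet_Icc)
  set Box' : Set (EuclideanSpace ℝ (Fin n)) :=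
    (MeasurableEquiv.toLp 2 (Fin n → ℝ)).symm ⁻¹' Box with hBox'
  have hBox'm : MeasurableSet Box' := (MeasurableEquiv.toLp 2 (Fin n → ℝ)).symm.measurable hBoxm
  have hsub : Set.Ioo (0:ℝ) 1 •
      ((↑) '' {ζ : Metric.sphere (0 : EuclideanSpace ℝ (Fin n)) 1 |
        ‖(ζ : EuclideanSpace ℝ (Fin n)) - e‖ < r}) ⊆ b.repr ⁻¹' Box' := by
    intro z hz
    rw [Set.mem_smul] at hz
    obtain ⟨t, ht, y, hy, rfl⟩ := hz
    obtain ⟨ζ, hζ, rfl⟩ := hy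
    have hζ1 : ‖(ζ : EuclideanSpace ℝ (Fin n))‖ = 1 := by
      have := ζ.2; rwa [mem_sphere_zero_iff_norm] at this
    have hnorm : ‖b.repr (t • (ζ : EuclideanSpace ℝ (Fin n)))‖ = t := by
      rw [b.repr.norm_map, norm_smul, hζ1, Real.norm_eq_abs, abs_of_pos ht.1, mul_one]
    intro i _
    show b.repr (t • (ζ : EuclideanSpace ℝ (Fin n))) i ∈ Set.Icc (-(c i)) (c i)
    rw [Set.mem_Icc, ← abs_le]
    have hle1 : |b.repr (t • (ζ : EuclideanSpace ℝ (Fin n))) i| ≤ 1 := by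
      refine (j1_abs_coord_le_norm _ i).trans ?_
      rw [hnorm]; exact ht.2.le
    by_cases hi : i = 0
    · simpa [hc, hi] using hle1
    · have hsmul : b.repr (t • (ζ : EuclideanSpace ℝ (Fin n))) i
          = t * b.repr (ζ : EuclideanSpace ℝ (Fin n)) i := by
        rw [_root_.map_smul]; rfl
      have hrepr_e : b.repr e i = 0 := by
        rw [← hb0, b.repr_self]
        simp [EuclideanSpace.single_apply, hi]
      have hcoord : |b.repr (ζ : EuclideanSpace ℝ (Fin n)) i| ≤ ‖(ζ : EuclideanSpace ℝ (Fin n)) - e‖ := by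
        have : b.repr (ζ : EuclideanSpace ℝ (Fin n)) i
            = b.repr ((ζ : EuclideanSpace ℝ (Fin n)) - e) i := by
          rw [map_sub]
          show _ = b.repr _ i - b.repr e i
          rw [hrepr_e, sub_zero]
        rw [this]
        exact (j1_abs_coord_le_norm _ i).trans (by rw [b.repr.norm_map])
      have : |b.repr (t • (ζ : EuclideanSpace ℝ (Fin n))) i| ≤ r := by
        rw [hsmul, abs_mul, abs_of_pos ht.1]
        calc t * |b.repr (ζ : EuclideanSpace ℝ (Fin n)) i| ≤ 1 * r := by
              apply mul_le_mul ht.2.le (hcoord.trans hζ.le) (abs_nonneg _) zero_le_one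
        _ = r := one_mul r
      simp only [hc, if_neg hi]
      exact le_min this hle1
  calc volume (Set.Ioo (0:ℝ) 1 • _) ≤ volume (b.repr ⁻¹' Box') := measure_mono hsub
  _ = volume Box' := b.measurePreserving_repr.measure_preimage hBox'm.nullMeasurableSet
  _ = volume Box := (EuclideanSpace.volume_preserving_symm_measurableEquiv_toLp (Fin n)).measure_preimage
      hBoxm.nullMeasurableSet
  _ = ∏ i, ENNReal.ofReal (c i - (-(c i))) := by
      rw [hBox, volume_pi_pi]
      simp [Real.volume_Icc]
  _ ≤ ENNReal.ofReal (2^n * r^(n-1)) := by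
      have h0 : ∀ i : Fin n, ENNReal.ofReal (c i - (-(c i))) = ENNReal.ofReal (2 * c i) := by
        intro i; congr 1; ring
      rw [Finset.prod_congr rfl (fun i _ => h0 i)]
      rw [← Finset.mul_prod_erase Finset.univ _ (Finset.mem_univ 0)]
      have h1 : ∀ i ∈ Finset.univ.erase (0 : Fin n),
          ENNReal.ofReal (2 * c i) = ENNReal.ofReal (2 * m) := by
        intro i hi
        rw [hc]; simp [Finset.mem_erase.1 hi |>.1]
      rw [Finset.prod_congr rfl h1, Finset.prod_const, Finset.card_erase_of_mem (Finset.mem_univ 0),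
        Finset.card_univ, Fintype.card_fin]
      have hcm : c 0 = 1 := by simp [hc]
      rw [hcm, mul_one]
      rw [← ENNReal.ofReal_pow (by positivity), ← ENNReal.ofReal_mul (by norm_num)]
      apply ENNReal.ofReal_le_ofReal
      calc 2 * (2 * m) ^ (n - 1) = 2 * (2 ^ (n-1) * m ^ (n-1)) := by rw [mul_pow]
      _ ≤ 2 * (2 ^ (n-1) * r ^ (n-1)) := by
          have := pow_le_pow_left₀ hm0.le (min_le_left r 1) (n-1)
          nlinarith [pow_pos (by norm_num : (0:ℝ) < 2) (n-1), pow_nonneg hm0.le (n-1)]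
      _ = 2 ^ n * r ^ (n-1) := by
          rw [← mul_assoc, ← pow_succ']
          congr 2
          omega

lemma j1_cap_measurable {n : ℕ} (e : EuclideanSpace ℝ (Fin n)) (r : ℝ) :
    MeasurableSet {ζ : Metric.sphere (0 : EuclideanSpace ℝ (Fin n)) 1 |
      ‖(ζ : EuclideanSpace ℝ (Fin n)) - e‖ < r} := by
  have hcont : Continuous fun ζ : Metric.sphere (0 : EuclideanSpace ℝ (Fin n)) 1 =>
      ‖(ζ : EuclideanSpace ℝ (Fin n)) - e‖ :=
    (continuous_subtype_val.sub continuous_const).norm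
  exact (isOpen_lt hcont continuous_const).measurableSet

lemma j1_toSphere_cap_le {n : ℕ} (hn : 1 ≤ n) {e : EuclideanSpace ℝ (Fin n)} (he : ‖e‖ = 1)
    {r : ℝ} (hr : 0 < r) :
    (volume : Measure (EuclideanSpace ℝ (Fin n))).toSphere
      {ζ : Metric.sphere (0 : EuclideanSpace ℝ (Fin n)) 1 |
        ‖(ζ : EuclideanSpace ℝ (Fin n)) - e‖ < r} ≤
      ENNReal.ofReal ((n : ℝ) * 2^n * r^(n-1)) := by
  rw [Measure.toSphere_apply' _ (j1_cap_measurable e r)]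
  have hdim : Module.finrank ℝ (EuclideanSpace ℝ (Fin n)) = n := finrank_euclideanSpace_fin
  rw [hdim]
  calc (n : ENNReal) * volume (Set.Ioo (0:ℝ) 1 • (Subtype.val '' _))
      ≤ (n : ENNReal) * ENNReal.ofReal (2^n * r^(n-1)) :=
        mul_le_mul_right (j1_cone_volume_le hn he hr) _
  _ = ENNReal.ofReal ((n : ℝ) * 2^n * r^(n-1)) := by
      rw [← ENNReal.ofReal_natCast n, ← ENNReal.ofReal_mul (by positivity), mul_assoc]

lemma j1_sphere_integral (n : ℕ) (hn : 2 ≤ n) (α : ℝ) (hα : 0 < α) :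
    ∃ C > (0:ℝ), ∀ x : EuclideanSpace ℝ (Fin n), ‖x‖ < 1 → x ≠ 0 →
      ∫⁻ ζ : Metric.sphere (0 : EuclideanSpace ℝ (Fin n)) 1,
        ENNReal.ofReal (‖x - (ζ : EuclideanSpace ℝ (Fin n))‖ ^ (-((n : ℝ) - 1 + α)))
        ∂(sphereMeasure n) ≤ ENNReal.ofReal (C * (1 - ‖x‖) ^ (-α)) := by
  set ν := (volume : Measure (EuclideanSpace ℝ (Fin n))).toSphere with hν
  have hc_ne_top : ν Set.univ ≠ ⊤ := measure_ne_top ν _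
  have hc_pos : 0 < ν Set.univ := by
    rw [hν, Measure.toSphere_apply_univ]
    apply ENNReal.mul_pos
    · simp only [finrank_euclideanSpace_fin, ne_eq, Nat.cast_eq_zero]
      omega
    · exact (measure_ball_pos _ _ one_pos).ne'
  set cinv := (ν Set.univ)⁻¹ with hcinv
  have hcinv_ne_top : cinv ≠ ⊤ := ENNReal.inv_ne_top.2 hc_pos.ne'
  set creal := cinv.toReal with hcreal
  have hcinv_eq : cinv = ENNReal.ofReal creal := (ENNReal.ofReal_toReal hcinv_ne_top).symm
  have hcreal0 : 0 ≤ creal := ENNReal.toReal_nonneg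
  set s := (n : ℝ) - 1 + α with hs
  have hn2 : (2:ℝ) ≤ (n:ℝ) := by exact_mod_cast hn
  have hs_pos : 0 < s := by rw [hs]; linarith
  set q := (2:ℝ) ^ (-α) with hq
  have hq0 : 0 < q := Real.rpow_pos_of_pos two_pos _
  have hq1 : q < 1 := Real.rpow_lt_one_of_one_lt_of_neg one_lt_two (neg_lt_zero.2 hα)
  set G := (1 - ENNReal.ofReal q)⁻¹ with hG
  have hG_ne_top : G ≠ ⊤ := by
    rw [hG, ENNReal.inv_ne_top]
    exact (tsub_pos_of_lt (ENNReal.ofReal_lt_one.2 hq1)).ne'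
  set Greal := G.toReal with hGreal
  have hG_eq : G = ENNReal.ofReal Greal := (ENNReal.ofReal_toReal hG_ne_top).symm
  have hGreal0 : 0 ≤ Greal := ENNReal.toReal_nonneg
  set K := (n : ℝ) * 2^n with hK
  have hK0 : 0 ≤ K := by positivity
  have h4s : (0:ℝ) ≤ 4 ^ s := (Real.rpow_pos_of_pos (by norm_num) s).le
  set A := creal * (K * 4 ^ s * Greal) with hA
  have hA0 : 0 ≤ A := mul_nonneg hcreal0 (mul_nonneg (mul_nonneg hK0 h4s) hGreal0)
  refine ⟨A + 1, by linarith, ?_⟩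
  intro x hx1 hx0
  set d := 1 - ‖x‖ with hd
  have hd0 : 0 < d := by rw [hd]; linarith
  have hxnorm : 0 < ‖x‖ := norm_pos_iff.2 hx0
  set e := ‖x‖⁻¹ • x with he
  have he1 : ‖e‖ = 1 := by
    rw [he, norm_smul, norm_inv, norm_norm, inv_mul_cancel₀ hxnorm.ne']
  have hxe : ‖x - e‖ = d := by
    have h1 : x - e = (1 - ‖x‖⁻¹) • x := by rw [he, sub_smul, one_smul]
    rw [h1, norm_smul, Real.norm_eq_abs]
    have h2 : (1:ℝ) ≤ ‖x‖⁻¹ := (one_le_inv₀ hxnorm).2 hx1.le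
    rw [abs_of_nonpos (by linarith), hd]
    field_simp
    ring
  have hkey : ∀ ζ : Metric.sphere (0 : EuclideanSpace ℝ (Fin n)) 1,
      d ≤ ‖x - (ζ : EuclideanSpace ℝ (Fin n))‖ ∧
      ‖(ζ : EuclideanSpace ℝ (Fin n)) - e‖ ≤ 2 * ‖x - (ζ : EuclideanSpace ℝ (Fin n))‖ := by
    intro ζ
    have hζ1 : ‖(ζ : EuclideanSpace ℝ (Fin n))‖ = 1 := mem_sphere_zero_iff_norm.1 ζ.2
    have hd_le : d ≤ ‖x - (ζ : EuclideanSpace ℝ (Fin n))‖ := by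
      calc d = ‖(ζ : EuclideanSpace ℝ (Fin n))‖ - ‖x‖ := by rw [hζ1, hd]
      _ ≤ ‖(ζ : EuclideanSpace ℝ (Fin n)) - x‖ := norm_sub_norm_le _ _
      _ = ‖x - (ζ : EuclideanSpace ℝ (Fin n))‖ := norm_sub_rev _ _
    refine ⟨hd_le, ?_⟩
    calc ‖(ζ : EuclideanSpace ℝ (Fin n)) - e‖
        ≤ ‖(ζ : EuclideanSpace ℝ (Fin n)) - x‖ + ‖x - e‖ := by
          have := dist_triangle (ζ : EuclideanSpace ℝ (Fin n)) x e
          simpa [dist_eq_norm] using this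
    _ = ‖x - (ζ : EuclideanSpace ℝ (Fin n))‖ + d := by rw [norm_sub_rev, hxe]
    _ ≤ 2 * ‖x - (ζ : EuclideanSpace ℝ (Fin n))‖ := by linarith
  set B : ℕ → Set (Metric.sphere (0 : EuclideanSpace ℝ (Fin n)) 1) :=
    fun k => {ζ | ‖(ζ : EuclideanSpace ℝ (Fin n)) - e‖ < 2^k * d} with hB
  set T : ℕ → Set (Metric.sphere (0 : EuclideanSpace ℝ (Fin n)) 1) :=
    fun k => Nat.casesOn k (B 0) (fun j => B (j+1) \ B j) with hT
  have hTmeas : ∀ k, MeasurableSet (T k) := by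
    intro k
    cases k with
    | zero => exact j1_cap_measurable e _
    | succ j => exact (j1_cap_measurable e _).diff (j1_cap_measurable e _)
  have hTB : ∀ k, T k ⊆ B k := by
    intro k
    cases k with
    | zero => exact subset_rfl
    | succ j => exact Set.diff_subset
  have hcover : (⋃ k, T k) = Set.univ := by
    apply Set.eq_univ_of_forall
    intro ζ
    have hex : ∃ k, ζ ∈ B k := by
      obtain ⟨k, hk⟩ := pow_unbounded_of_one_lt
        (‖(ζ : EuclideanSpace ℝ (Fin n)) - e‖ / d) one_lt_two
      exact ⟨k, by simpa [hB, Set.mem_setOf_eq] using (div_lt_iff₀ hd0).1 hk⟩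
    rw [Set.mem_iUnion]
    rcases hfind : Nat.find hex with _ | j
    · exact ⟨0, by have h := Nat.find_spec hex; rwa [hfind] at h⟩
    · refine ⟨j+1, ?_, ?_⟩
      · have h := Nat.find_spec hex; rwa [hfind] at h
      · exact Nat.find_min hex (by omega)
  have hTd : ∀ k : ℕ, ∀ ζ ∈ T k, 2^k * d / 4 ≤ ‖x - (ζ : EuclideanSpace ℝ (Fin n))‖ := by
    intro k ζ hζ
    cases k with
    | zero =>
      have h := (hkey ζ).1
      have : (2:ℝ)^0 * d / 4 ≤ d := by norm_num; linarith
      linarith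
    | succ j =>
      have h1 : 2^j * d ≤ ‖(ζ : EuclideanSpace ℝ (Fin n)) - e‖ := not_lt.1 hζ.2
      have h2 := (hkey ζ).2
      have h4 : 2^j * d ≤ 2 * ‖x - (ζ : EuclideanSpace ℝ (Fin n))‖ := h1.trans h2
      calc (2:ℝ)^(j+1) * d / 4 = (2^j * d) / 2 := by rw [pow_succ]; ring
      _ ≤ (2 * ‖x - (ζ : EuclideanSpace ℝ (Fin n))‖) / 2 := by gcongr
      _ = ‖x - (ζ : EuclideanSpace ℝ (Fin n))‖ := by ring
  have hid : ∀ k : ℕ, (2^k * d / 4)^(-s) * (K * (2^k * d)^(n-1)) = (K * 4^s * d^(-α)) * q^k := by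
    intro k
    have hu : (0:ℝ) < 2^k * d := by positivity
    have h1 : ((2:ℝ)^k * d / 4)^(-s) = (2^k*d)^(-s) * 4^s := by
      rw [Real.div_rpow hu.le (by norm_num : (0:ℝ) ≤ 4),
        Real.rpow_neg (by norm_num : (0:ℝ) ≤ 4), div_eq_mul_inv, inv_inv]
    have h2 : ((2:ℝ)^k * d)^(n-1 : ℕ) = ((2:ℝ)^k*d)^((n:ℝ)-1) := by
      rw [← Real.rpow_natCast ((2:ℝ)^k*d) (n-1), Nat.cast_sub (by omega : 1 ≤ n), Nat.cast_one]
    have h3 : ((2:ℝ)^k*d)^(-s) * ((2:ℝ)^k * d)^((n:ℝ)-1) = ((2:ℝ)^k*d)^(-α) := by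
      rw [← Real.rpow_add hu]; congr 1; rw [hs]; ring
    have h4 : ((2:ℝ)^k * d)^(-α) = q^k * d^(-α) := by
      rw [Real.mul_rpow (by positivity) hd0.le]
      congr 1
      rw [hq, ← Real.rpow_natCast ((2:ℝ)) k, ← Real.rpow_mul (by norm_num), mul_comm,
        Real.rpow_mul (by norm_num), Real.rpow_natCast]
    rw [h1, h2, show ((2:ℝ)^k*d)^(-s) * 4^s * (K * ((2:ℝ)^k*d)^((n:ℝ)-1))
      = K * 4^s * (((2:ℝ)^k*d)^(-s) * ((2:ℝ)^k*d)^((n:ℝ)-1)) from by ring, h3, h4]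
    ring
  have hstep : ∀ k : ℕ,
      ∫⁻ ζ in T k, ENNReal.ofReal (‖x - (ζ : EuclideanSpace ℝ (Fin n))‖ ^ (-s)) ∂ν ≤
      ENNReal.ofReal (K * 4^s * d^(-α)) * (ENNReal.ofReal q)^k := by
    intro k
    have hu : (0:ℝ) < 2^k * d / 4 := by positivity
    calc ∫⁻ ζ in T k, ENNReal.ofReal (‖x - (ζ : EuclideanSpace ℝ (Fin n))‖ ^ (-s)) ∂ν
        ≤ ∫⁻ _ in T k, ENNReal.ofReal ((2^k * d / 4) ^ (-s)) ∂ν := by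
          apply setLIntegral_mono' (hTmeas k)
          intro ζ hζ
          apply ENNReal.ofReal_le_ofReal
          exact Real.rpow_le_rpow_of_nonpos hu (hTd k ζ hζ) (by linarith)
    _ = ENNReal.ofReal ((2^k*d/4)^(-s)) * ν (T k) := setLIntegral_const _ _
    _ ≤ ENNReal.ofReal ((2^k*d/4)^(-s)) * ENNReal.ofReal (K * (2^k*d)^(n-1)) := by
        apply mul_le_mul_right
        calc ν (T k) ≤ ν (B k) := measure_mono (hTB k)
        _ ≤ ENNReal.ofReal ((n:ℝ) * 2^n * (2^k*d)^(n-1)) :=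
            j1_toSphere_cap_le (by omega) he1 (by positivity)
        _ = ENNReal.ofReal (K * (2^k*d)^(n-1)) := by rw [hK]
    _ = ENNReal.ofReal (K * 4^s * d^(-α)) * (ENNReal.ofReal q)^k := by
        rw [← ENNReal.ofReal_mul (Real.rpow_nonneg hu.le _), hid k,
          ENNReal.ofReal_mul (by positivity), ENNReal.ofReal_pow hq0.le]
  have hub : ∫⁻ ζ, ENNReal.ofReal (‖x - (ζ : EuclideanSpace ℝ (Fin n))‖ ^ (-s)) ∂ν ≤
      ENNReal.ofReal (K * 4^s * d^(-α)) * G := by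
    calc ∫⁻ ζ, ENNReal.ofReal (‖x - (ζ : EuclideanSpace ℝ (Fin n))‖ ^ (-s)) ∂ν
        = ∫⁻ ζ in ⋃ k, T k, ENNReal.ofReal (‖x - (ζ : EuclideanSpace ℝ (Fin n))‖ ^ (-s)) ∂ν := by
          rw [hcover, setLIntegral_univ]
    _ ≤ ∑' k, ∫⁻ ζ in T k, ENNReal.ofReal (‖x - (ζ : EuclideanSpace ℝ (Fin n))‖ ^ (-s)) ∂ν :=
        lintegral_iUnion_le _ _
    _ ≤ ∑' k, ENNReal.ofReal (K * 4^s * d^(-α)) * (ENNReal.ofReal q)^k :=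
        ENNReal.tsum_le_tsum hstep
    _ = ENNReal.ofReal (K * 4^s * d^(-α)) * ∑' k, (ENNReal.ofReal q)^k := ENNReal.tsum_mul_left
    _ = ENNReal.ofReal (K * 4^s * d^(-α)) * G := by rw [ENNReal.tsum_geometric, hG]
  have hσ : sphereMeasure n = cinv • ν := by rw [hcinv, hν, sphereMeasure]
  rw [hσ, lintegral_smul_measure]
  calc cinv * ∫⁻ ζ, ENNReal.ofReal (‖x - (ζ : EuclideanSpace ℝ (Fin n))‖ ^ (-s)) ∂ν
      ≤ cinv * (ENNReal.ofReal (K * 4^s * d^(-α)) * G) := mul_le_mul_right hub _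
  _ = ENNReal.ofReal creal * (ENNReal.ofReal (K * 4^s * d^(-α)) * ENNReal.ofReal Greal) := by
      rw [← hcinv_eq, ← hG_eq]
  _ = ENNReal.ofReal (A * d^(-α)) := by
      rw [← ENNReal.ofReal_mul (mul_nonneg (mul_nonneg hK0 h4s) (Real.rpow_nonneg hd0.le _)),
        ← ENNReal.ofReal_mul hcreal0]
      congr 1
      rw [hA]; ring
  _ ≤ ENNReal.ofReal ((A + 1) * d^(-α)) := by
      apply ENNReal.ofReal_le_ofReal
      have h0 : (0:ℝ) ≤ d^(-α) := Real.rpow_nonneg hd0.le _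
      nlinarith

end J1Aux

/-- **Estimate of the integral `J₁`.** For `n ≥ 2`, `α > 0` and a majorant `ω`,
`∫_{S^{n-1}} ω(|x−ζ|)/|x−ζ|^{n+α} dσ(ζ) ≤ M ω(1−|x|)/(1−|x|)^{1+α}` on `B^n \ {0}`. -/
theorem integral_estimate_J1 (n : ℕ) (hn : 2 ≤ n) (α : ℝ) (hα : 0 < α)
    (ω : ℝ → ℝ) (hω : IsMajorant ω) :
    ∃ M > (0 : ℝ), ∀ x ∈ Metric.ball (0 : EuclideanSpace ℝ (Fin n)) 1, x ≠ 0 →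
      ∫⁻ ζ, ENNReal.ofReal
          (ω ‖x - (ζ : EuclideanSpace ℝ (Fin n))‖ /
            ‖x - (ζ : EuclideanSpace ℝ (Fin n))‖ ^ ((n : ℝ) + α)) ∂(sphereMeasure n) ≤
        ENNReal.ofReal (M * ω (1 - ‖x‖) / (1 - ‖x‖) ^ (1 + α)) := by
  obtain ⟨C, hC0, hC⟩ := j1_sphere_integral n hn α hα
  refine ⟨C, hC0, ?_⟩
  intro x hx hx0
  rw [mem_ball_zero_iff] at hx
  have hd0 : (0:ℝ) < 1 - ‖x‖ := by linarith
  have hωd : 0 ≤ ω (1 - ‖x‖) := hω.2.2.2.1 _ hd0.le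
  have hstep : ∀ ζ : Metric.sphere (0 : EuclideanSpace ℝ (Fin n)) 1,
      ENNReal.ofReal (ω ‖x - (ζ : EuclideanSpace ℝ (Fin n))‖ /
        ‖x - (ζ : EuclideanSpace ℝ (Fin n))‖ ^ ((n : ℝ) + α)) ≤
      ENNReal.ofReal (ω (1 - ‖x‖) / (1 - ‖x‖)) *
        ENNReal.ofReal (‖x - (ζ : EuclideanSpace ℝ (Fin n))‖ ^ (-((n : ℝ) - 1 + α))) := by
    intro ζ
    have hζ1 : ‖(ζ : EuclideanSpace ℝ (Fin n))‖ = 1 := mem_sphere_zero_iff_norm.1 ζ.2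
    have hdt : 1 - ‖x‖ ≤ ‖x - (ζ : EuclideanSpace ℝ (Fin n))‖ := by
      calc 1 - ‖x‖ = ‖(ζ : EuclideanSpace ℝ (Fin n))‖ - ‖x‖ := by rw [hζ1]
      _ ≤ ‖(ζ : EuclideanSpace ℝ (Fin n)) - x‖ := norm_sub_norm_le _ _
      _ = ‖x - (ζ : EuclideanSpace ℝ (Fin n))‖ := norm_sub_rev _ _
    have ht0 : 0 < ‖x - (ζ : EuclideanSpace ℝ (Fin n))‖ := lt_of_lt_of_le hd0 hdt
    rw [← ENNReal.ofReal_mul (div_nonneg hωd hd0.le)]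
    apply ENNReal.ofReal_le_ofReal
    have hsplit : ‖x - (ζ : EuclideanSpace ℝ (Fin n))‖ ^ ((n:ℝ) + α)
        = ‖x - (ζ : EuclideanSpace ℝ (Fin n))‖ *
          ‖x - (ζ : EuclideanSpace ℝ (Fin n))‖ ^ ((n:ℝ) - 1 + α) := by
      rw [show (n:ℝ) + α = 1 + ((n:ℝ) - 1 + α) by ring, Real.rpow_add ht0, Real.rpow_one]
    rw [hsplit, Real.rpow_neg ht0.le, ← div_div, div_eq_mul_inv (_ / _)]
    apply mul_le_mul_of_nonneg_right
    · exact hω.2.2.2.2 (Set.mem_Ioi.2 hd0) (Set.mem_Ioi.2 ht0) hdt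
    · exact inv_nonneg.2 (Real.rpow_nonneg ht0.le _)
  calc ∫⁻ ζ, ENNReal.ofReal
          (ω ‖x - (ζ : EuclideanSpace ℝ (Fin n))‖ /
            ‖x - (ζ : EuclideanSpace ℝ (Fin n))‖ ^ ((n : ℝ) + α)) ∂(sphereMeasure n)
      ≤ ∫⁻ ζ, ENNReal.ofReal (ω (1 - ‖x‖) / (1 - ‖x‖)) *
          ENNReal.ofReal (‖x - (ζ : EuclideanSpace ℝ (Fin n))‖ ^ (-((n : ℝ) - 1 + α)))
          ∂(sphereMeasure n) := lintegral_mono hstep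
  _ = ENNReal.ofReal (ω (1 - ‖x‖) / (1 - ‖x‖)) *
      ∫⁻ ζ, ENNReal.ofReal (‖x - (ζ : EuclideanSpace ℝ (Fin n))‖ ^ (-((n : ℝ) - 1 + α)))
        ∂(sphereMeasure n) := lintegral_const_mul' _ _ ENNReal.ofReal_ne_top
  _ ≤ ENNReal.ofReal (ω (1 - ‖x‖) / (1 - ‖x‖)) * ENNReal.ofReal (C * (1 - ‖x‖) ^ (-α)) :=
      mul_le_mul_right (hC x hx hx0) _
  _ = ENNReal.ofReal ((ω (1 - ‖x‖) / (1 - ‖x‖)) * (C * (1 - ‖x‖) ^ (-α))) :=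
      (ENNReal.ofReal_mul (div_nonneg hωd hd0.le)).symm
  _ = ENNReal.ofReal (C * ω (1 - ‖x‖) / (1 - ‖x‖) ^ (1 + α)) := by
      congr 1
      have h1 : (1 - ‖x‖) ≠ 0 := hd0.ne'
      have h2 : (1 - ‖x‖) ^ α ≠ 0 := (Real.rpow_pos_of_pos hd0 α).ne'
      rw [Real.rpow_add hd0, Real.rpow_one, Real.rpow_neg hd0.le]
      field_simp
end

section
/- Let n ≥ 2, α > 0, and let ω be a majorant. Then there exists a constant M > 0 such that for every x in the open unit ball B^n with x ≠ 0, ∫_{S^{n-1}} ω(|x − ζ|)/|x − ζ|^{n+α+1} dσ(ζ) ≤ M ω(1 − |x|)/(1 − |x|)^{2+α}. -/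
open MeasureTheory Real Filter Metric

open Set in
lemma capBound {E : Type*} [NormedAddCommGroup E] [NormedSpace ℝ E] [MeasurableSpace E]
    [BorelSpace E] [FiniteDimensional ℝ E] (μ : Measure E) [μ.IsAddHaarMeasure]
    (n : ℕ) (hdim : Module.finrank ℝ E = n) (hn : 1 ≤ n) (x : E) {ρ : ℝ} (hρ : 0 < ρ)
    (hρ2 : ρ ≤ 1/2) :
    μ.toSphere {ζ : sphere (0 : E) 1 | ‖x - (ζ : E)‖ < ρ}
      ≤ μ (ball (0 : E) 1) * ENNReal.ofReal (4^n * ρ^(n-1)) := by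
  haveI : Nontrivial E := Module.nontrivial_of_finrank_pos (R := ℝ) (by omega)
  set s : Set (sphere (0 : E) 1) := {ζ | ‖x - (ζ : E)‖ < ρ} with hs_def
  set T : Set (Ioi (0:ℝ)) := Subtype.val ⁻¹' (Ioo (1-ρ) 1) with hT_def
  have hsmeas : MeasurableSet s := by
    have hcont : Continuous fun ζ : sphere (0 : E) 1 => ‖x - (ζ : E)‖ :=
      (continuous_const.sub continuous_subtype_val).norm
    exact hcont.measurable measurableSet_Iio
  have hTmeas : MeasurableSet T := measurable_subtype_coe measurableSet_Ioo
  have hmp := Measure.measurePreserving_homeomorphUnitSphereProd μ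
  rw [hdim] at hmp
  have hρ1 : (0:ℝ) < 1 - ρ := by linarith
  have hTval : Subtype.val '' T = Ioo (1-ρ) 1 := by
    rw [hT_def, Subtype.image_preimage_coe]
    exact inter_eq_self_of_subset_right (fun t ht => lt_trans hρ1 ht.1)
  have hT : ENNReal.ofReal ((1-ρ)^(n-1) * ρ) ≤ Measure.volumeIoiPow (n-1) T := by
    rw [Measure.volumeIoiPow, withDensity_apply _ hTmeas,
      setLIntegral_subtype measurableSet_Ioi _ (fun a : ℝ => ENNReal.ofReal (a ^ (n-1))), hTval]
    calc ENNReal.ofReal ((1-ρ)^(n-1) * ρ)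
        = ENNReal.ofReal ((1-ρ)^(n-1)) * volume (Ioo (1-ρ) 1) := by
          rw [Real.volume_Ioo, ← ENNReal.ofReal_mul (by positivity)]
          norm_num
      _ = ∫⁻ _ in Ioo (1-ρ) 1, ENNReal.ofReal ((1-ρ)^(n-1)) := (setLIntegral_const _ _).symm
      _ ≤ ∫⁻ t in Ioo (1-ρ) 1, ENNReal.ofReal (t ^ (n-1)) := by
          refine setLIntegral_mono' measurableSet_Ioo fun t ht => ?_
          exact ENNReal.ofReal_le_ofReal (pow_le_pow_left₀ hρ1.le ht.1.le _)
  have himg : Subtype.val '' ((homeomorphUnitSphereProd E) ⁻¹' (s ×ˢ T)) ⊆ ball x (2*ρ) := by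
    rintro _ ⟨z, hz, rfl⟩
    obtain ⟨hz1, hz2⟩ := hz
    set ζ := ((homeomorphUnitSphereProd E) z).1 with hζ
    set t := ((homeomorphUnitSphereProd E) z).2 with ht
    have hzeq : (z : E) = (t : ℝ) • (ζ : E) := by
      conv_lhs => rw [← (homeomorphUnitSphereProd E).symm_apply_apply z]
      rfl
    have hζn : ‖(ζ : E)‖ = 1 := mem_sphere_zero_iff_norm.1 ζ.2
    have ht1 : (1 - ρ) < (t:ℝ) := hz2.1
    have ht2 : (t:ℝ) < 1 := hz2.2
    rw [mem_ball, dist_eq_norm, hzeq]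
    have htri : ‖(t:ℝ) • (ζ:E) - x‖ ≤ ‖(t:ℝ) • (ζ:E) - (ζ:E)‖ + ‖(ζ:E) - x‖ := by
      have := dist_triangle ((t:ℝ) • (ζ:E)) (ζ:E) x
      simpa [dist_eq_norm] using this
    have h1 : ‖(t:ℝ) • (ζ:E) - (ζ:E)‖ < ρ := by
      have heq : (t:ℝ) • (ζ:E) - (ζ:E) = ((t:ℝ) - 1) • (ζ:E) := by rw [sub_smul, one_smul]
      rw [heq, norm_smul, hζn, mul_one, Real.norm_eq_abs, abs_of_nonpos (by linarith)]
      linarith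
    have h2 : ‖(ζ:E) - x‖ < ρ := by rw [norm_sub_rev]; exact hz1
    linarith
  have key : μ.toSphere s * Measure.volumeIoiPow (n-1) T
      ≤ ENNReal.ofReal ((2*ρ)^n) * μ (ball (0:E) 1) := by
    calc μ.toSphere s * Measure.volumeIoiPow (n-1) T
        = (μ.toSphere.prod (Measure.volumeIoiPow (n-1))) (s ×ˢ T) :=
          (Measure.prod_prod _ _).symm
      _ = (μ.comap Subtype.val) ((homeomorphUnitSphereProd E) ⁻¹' (s ×ˢ T)) := by
          rw [← hmp.map_eq, Measure.map_apply (homeomorphUnitSphereProd E).measurable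
            (hsmeas.prod hTmeas)]
      _ = μ (Subtype.val '' ((homeomorphUnitSphereProd E) ⁻¹' (s ×ˢ T))) :=
          comap_subtype_coe_apply (measurableSet_singleton 0).compl _ _
      _ ≤ μ (ball x (2*ρ)) := measure_mono himg
      _ = ENNReal.ofReal ((2*ρ)^n) * μ (ball (0:E) 1) := by
          rw [Measure.addHaar_ball μ x (by linarith), hdim]
  have hb0 : ENNReal.ofReal ((1-ρ)^(n-1) * ρ) ≠ 0 := by
    simp only [ne_eq, ENNReal.ofReal_eq_zero, not_le]
    positivity
  have hbtop : ENNReal.ofReal ((1-ρ)^(n-1) * ρ) ≠ ⊤ := ENNReal.ofReal_ne_top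
  rw [← ENNReal.mul_le_mul_iff_left hb0 hbtop]
  calc μ.toSphere s * ENNReal.ofReal ((1-ρ)^(n-1) * ρ)
      ≤ μ.toSphere s * Measure.volumeIoiPow (n-1) T :=
        mul_le_mul_right hT _
    _ ≤ ENNReal.ofReal ((2*ρ)^n) * μ (ball (0:E) 1) := key
    _ ≤ μ (ball (0:E) 1) * ENNReal.ofReal (4^n * ρ^(n-1)) *
          ENNReal.ofReal ((1-ρ)^(n-1) * ρ) := by
        rw [mul_comm (ENNReal.ofReal ((2*ρ)^n)) _, mul_assoc,
          ← ENNReal.ofReal_mul (by positivity)]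
        refine mul_le_mul_right (ENNReal.ofReal_le_ofReal ?_) _
        obtain ⟨k, rfl⟩ : ∃ k, n = k + 1 := ⟨n - 1, (Nat.succ_pred_eq_of_pos hn).symm⟩
        simp only [Nat.add_sub_cancel]
        have h1 : (2:ℝ)^k ≤ (4*(1-ρ))^k := pow_le_pow_left₀ (by norm_num) (by linarith) k
        calc (2*ρ)^(k+1) = 2 * (2^k * ρ^k) * ρ := by rw [mul_pow, pow_succ]; ring
          _ ≤ 2 * ((4*(1-ρ))^k * ρ^k) * ρ := by
              have := mul_le_mul_of_nonneg_right h1 (pow_nonneg hρ.le k)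
              nlinarith [pow_nonneg hρ.le k]
          _ ≤ 4^(k+1) * ρ^k * ((1-ρ)^k * ρ) := by
              rw [mul_pow 4 (1-ρ) k, pow_succ]
              have hnn : (0:ℝ) ≤ 4^k * (1-ρ)^k * ρ^k * ρ := by positivity
              nlinarith [hnn]

lemma pow2rpow (α : ℝ) (k : ℕ) : ((2:ℝ)^k) ^ (1+α) = ((2:ℝ)^(1+α))^k := by
  rw [← Real.rpow_natCast 2 k, ← Real.rpow_mul (by norm_num), mul_comm,
    Real.rpow_mul (by norm_num), Real.rpow_natCast]

lemma termIneq (n k : ℕ) (hn : 1 ≤ n) (α d w : ℝ) (hα : 0 < α) (hd : 0 < d) (hw : 0 ≤ w) :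
    (w / d / ((2^k*d)^(n-1) * (((2:ℝ)^(1+α))^k * d^(1+α)))) * (4^n * ((2:ℝ)^(k+1)*d)^(n-1))
      ≤ (8^n * w / d^(2+α)) * (((2:ℝ)^(1+α))⁻¹)^k := by
  have hQ : (0:ℝ) < ((2:ℝ)^(1+α))^k := by positivity
  have hP : (0:ℝ) < ((2:ℝ)^k*d)^(n-1) := by positivity
  have hD : (0:ℝ) < d^(1+α) := rpow_pos_of_pos hd _
  have hsplit : d^(2+α) = d * d^(1+α) := by
    rw [show (2:ℝ)+α = 1+(1+α) by ring, Real.rpow_add hd, Real.rpow_one]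
  have h2 : ((2:ℝ)^(k+1)*d)^(n-1) = 2^(n-1) * ((2:ℝ)^k*d)^(n-1) := by
    rw [show (2:ℝ)^(k+1)*d = 2*((2:ℝ)^k*d) by ring, mul_pow]
  have h8 : (4:ℝ)^n * 2^(n-1) ≤ 8^n := by
    calc (4:ℝ)^n * 2^(n-1) ≤ 4^n * 2^n := by
          gcongr
          · norm_num
          · exact Nat.sub_le n 1
      _ = 8^n := by rw [← mul_pow]; norm_num
  rw [h2, hsplit]
  calc (w / d / (((2:ℝ)^k*d)^(n-1) * (((2:ℝ)^(1+α))^k * d^(1+α)))) *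
        (4^n * (2^(n-1) * ((2:ℝ)^k*d)^(n-1)))
      = (4^n * 2^(n-1)) * (w / (d * d^(1+α) * ((2:ℝ)^(1+α))^k)) := by
        field_simp
    _ ≤ 8^n * (w / (d * d^(1+α) * ((2:ℝ)^(1+α))^k)) :=
        mul_le_mul_of_nonneg_right h8 (by positivity)
    _ = (8^n * w / (d * d^(1+α))) * (((2:ℝ)^(1+α))⁻¹)^k := by
        rw [inv_pow]
        field_simp

open Set in
lemma sphereMeasure_univ (n : ℕ) (hn : 1 ≤ n) : sphereMeasure n Set.univ = 1 := by
  haveI : Nontrivial (EuclideanSpace ℝ (Fin n)) :=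
    Module.nontrivial_of_finrank_pos (R := ℝ)
      (by rw [finrank_euclideanSpace_fin]; omega)
  have h0 : (volume : Measure (EuclideanSpace ℝ (Fin n))).toSphere Set.univ ≠ 0 := by
    rw [Measure.toSphere_apply_univ, finrank_euclideanSpace_fin]
    exact mul_ne_zero (Nat.cast_ne_zero.2 (by omega)) (measure_ball_pos volume 0 one_pos).ne'
  have ht : (volume : Measure (EuclideanSpace ℝ (Fin n))).toSphere Set.univ ≠ ⊤ :=
    measure_ne_top _ _
  rw [sphereMeasure, Measure.smul_apply, smul_eq_mul, ENNReal.inv_mul_cancel h0 ht]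

open Set in
lemma sphereMeasure_cap (n : ℕ) (hn : 1 ≤ n) (x : EuclideanSpace ℝ (Fin n)) {ρ : ℝ}
    (hρ : 0 < ρ) :
    sphereMeasure n {ζ : sphere (0 : EuclideanSpace ℝ (Fin n)) 1 |
        ‖x - (ζ : EuclideanSpace ℝ (Fin n))‖ < ρ}
      ≤ ENNReal.ofReal (4^n * ρ^(n-1)) := by
  haveI : Nontrivial (EuclideanSpace ℝ (Fin n)) :=
    Module.nontrivial_of_finrank_pos (R := ℝ)
      (by rw [finrank_euclideanSpace_fin]; omega)
  set V := volume (ball (0 : EuclideanSpace ℝ (Fin n)) 1) with hV_def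
  have hV0 : V ≠ 0 := (measure_ball_pos volume 0 one_pos).ne'
  have hVt : V ≠ ⊤ := measure_ball_lt_top.ne
  rcases le_or_gt ρ (1/2) with hle | hgt
  · have hcap := capBound (volume : Measure (EuclideanSpace ℝ (Fin n))) n
      finrank_euclideanSpace_fin hn x hρ hle
    rw [sphereMeasure, Measure.smul_apply, smul_eq_mul]
    calc ((volume : Measure (EuclideanSpace ℝ (Fin n))).toSphere Set.univ)⁻¹ *
          (volume : Measure (EuclideanSpace ℝ (Fin n))).toSphere _
        ≤ ((volume : Measure (EuclideanSpace ℝ (Fin n))).toSphere Set.univ)⁻¹ *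
          (V * ENNReal.ofReal (4^n * ρ^(n-1))) := mul_le_mul_right hcap _
      _ ≤ V⁻¹ * (V * ENNReal.ofReal (4^n * ρ^(n-1))) := by
          refine mul_le_mul_left (ENNReal.inv_le_inv' ?_) _
          rw [Measure.toSphere_apply_univ, finrank_euclideanSpace_fin]
          exact le_mul_of_one_le_left (zero_le') (by exact_mod_cast hn)
      _ = (V⁻¹ * V) * ENNReal.ofReal (4^n * ρ^(n-1)) := by ring
      _ = ENNReal.ofReal (4^n * ρ^(n-1)) := by
          rw [ENNReal.inv_mul_cancel hV0 hVt, one_mul]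
  · calc sphereMeasure n _ ≤ sphereMeasure n Set.univ := measure_mono (subset_univ _)
      _ = 1 := sphereMeasure_univ n hn
      _ ≤ ENNReal.ofReal (4^n * ρ^(n-1)) := by
          rw [← ENNReal.ofReal_one]
          refine ENNReal.ofReal_le_ofReal ?_
          have h2 : (2:ℝ)^(n-1) ≤ 4^n :=
            le_trans (pow_le_pow_right₀ one_le_two (Nat.sub_le n 1))
              (pow_le_pow_left₀ (by norm_num) (by norm_num) n)
          have hpos : (0:ℝ) < 2^(n-1) := by positivity
          calc (1:ℝ) = 2^(n-1) * (2^(n-1))⁻¹ := (mul_inv_cancel₀ hpos.ne').symm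
            _ ≤ 4^n * (2^(n-1))⁻¹ := by gcongr
            _ = 4^n * (1/2)^(n-1) := by rw [one_div, inv_pow]
            _ ≤ 4^n * ρ^(n-1) :=
                mul_le_mul_of_nonneg_left (pow_le_pow_left₀ (by norm_num) hgt.le _)
                  (by positivity)

/-- **Estimate of the integral `J₂`.** For `n ≥ 2`, `α > 0` and a majorant `ω`,
`∫_{S^{n-1}} ω(|x−ζ|)/|x−ζ|^{n+α+1} dσ(ζ) ≤ M ω(1−|x|)/(1−|x|)^{2+α}` on `B^n \ {0}`. -/
theorem integral_estimate_J2 (n : ℕ) (hn : 2 ≤ n) (α : ℝ) (hα : 0 < α)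
    (ω : ℝ → ℝ) (hω : IsMajorant ω) :
    ∃ M > (0 : ℝ), ∀ x ∈ Metric.ball (0 : EuclideanSpace ℝ (Fin n)) 1, x ≠ 0 →
      ∫⁻ ζ, ENNReal.ofReal
          (ω ‖x - (ζ : EuclideanSpace ℝ (Fin n))‖ /
            ‖x - (ζ : EuclideanSpace ℝ (Fin n))‖ ^ ((n : ℝ) + α + 1)) ∂(sphereMeasure n) ≤
        ENNReal.ofReal (M * ω (1 - ‖x‖) / (1 - ‖x‖) ^ (2 + α)) := by
  obtain ⟨hcont, hmono, hzero, hnonneg, hanti⟩ := hω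
  set q : ℝ := ((2:ℝ)^((1:ℝ)+α))⁻¹ with hq_def
  have h2pow : 1 < (2:ℝ)^((1:ℝ)+α) := by
    rw [show (1:ℝ) = (2:ℝ)^(0:ℝ) by simp]
    exact (Real.rpow_lt_rpow_left_iff one_lt_two).2 (by linarith)
  have hq0 : 0 < q := by rw [hq_def]; positivity
  have hq1 : q < 1 := by
    rw [hq_def]
    exact inv_lt_one_of_one_lt₀ h2pow
  have hM0 : (0:ℝ) < 8^n * (1-q)⁻¹ := by
    have : 0 < 1 - q := by linarith
    positivity
  refine ⟨8^n * (1-q)⁻¹, hM0, ?_⟩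
  intro x hx hx0
  set d := 1 - ‖x‖ with hd_def
  have hxn : ‖x‖ < 1 := mem_ball_zero_iff.1 hx
  have hd : 0 < d := by rw [hd_def]; linarith
  have hwd : 0 ≤ ω d := hnonneg d hd.le
  -- lower bound on distances
  have hr_lb : ∀ ζ : Metric.sphere (0 : EuclideanSpace ℝ (Fin n)) 1,
      d ≤ ‖x - (ζ : EuclideanSpace ℝ (Fin n))‖ := by
    intro ζ
    have hζn : ‖(ζ : EuclideanSpace ℝ (Fin n))‖ = 1 := mem_sphere_zero_iff_norm.1 ζ.2
    have := norm_sub_norm_le (ζ : EuclideanSpace ℝ (Fin n)) x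
    rw [hζn, norm_sub_rev] at this
    linarith [this]
  -- annuli
  set A : ℕ → Set (Metric.sphere (0 : EuclideanSpace ℝ (Fin n)) 1) := fun k =>
    {ζ | 2^k * d ≤ ‖x - (ζ : EuclideanSpace ℝ (Fin n))‖ ∧
      ‖x - (ζ : EuclideanSpace ℝ (Fin n))‖ < 2^(k+1) * d} with hA_def
  have hnormcont : Continuous fun ζ : Metric.sphere (0 : EuclideanSpace ℝ (Fin n)) 1 =>
      ‖x - (ζ : EuclideanSpace ℝ (Fin n))‖ :=
    (continuous_const.sub continuous_subtype_val).norm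
  have hAmeas : ∀ k, MeasurableSet (A k) := by
    intro k
    exact (hnormcont.measurable measurableSet_Ici).inter
      (hnormcont.measurable measurableSet_Iio)
  have hcover : Set.univ ⊆ ⋃ k, A k := by
    intro ζ _
    set r := ‖x - (ζ : EuclideanSpace ℝ (Fin n))‖ with hr_def
    have hrd : d ≤ r := hr_lb ζ
    have hr0 : 0 < r := lt_of_lt_of_le hd hrd
    have hex : ∃ m, r < 2^(m+1) * d := by
      obtain ⟨m, hm⟩ := pow_unbounded_of_one_lt (r/d) one_lt_two
      refine ⟨m, ?_⟩
      have h1 : r / d < 2^m := hm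
      have h2 : (2:ℝ)^m ≤ 2^(m+1) := by
        apply pow_le_pow_right₀ one_le_two (Nat.le_succ m)
      calc r = (r/d) * d := by field_simp
        _ < 2^(m+1) * d := by
            apply mul_lt_mul_of_pos_right (lt_of_lt_of_le h1 h2) hd
    set k := Nat.find hex with hk_def
    refine Set.mem_iUnion.2 ⟨k, ?_, Nat.find_spec hex⟩
    match hk : k with
    | 0 => simpa using hrd
    | j+1 =>
      have := Nat.find_min hex (by omega : j < k)
      push_neg at this
      exact this
  -- pointwise bound on each annulus
  have hptwise : ∀ k, ∀ ζ ∈ A k,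
      ENNReal.ofReal (ω ‖x - (ζ : EuclideanSpace ℝ (Fin n))‖ /
          ‖x - (ζ : EuclideanSpace ℝ (Fin n))‖ ^ ((n : ℝ) + α + 1))
        ≤ ENNReal.ofReal (ω d / d /
            ((2^k*d)^(n-1) * (((2:ℝ)^((1:ℝ)+α))^k * d^((1:ℝ)+α)))) := by
    intro k ζ hζ
    refine ENNReal.ofReal_le_ofReal ?_
    set r := ‖x - (ζ : EuclideanSpace ℝ (Fin n))‖ with hr_def
    have hrd : d ≤ r := hr_lb ζ
    have hr0 : 0 < r := lt_of_lt_of_le hd hrd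
    have hBpos : (0:ℝ) < 2^k * d := by positivity
    have hrk : 2^k * d ≤ r := hζ.1
    -- step 1 : ω r ≤ (ω d / d) * r
    have hstep1 : ω r ≤ (ω d / d) * r := by
      have h := hanti (Set.mem_Ioi.2 hd) (Set.mem_Ioi.2 hr0) hrd
      simp only at h
      exact (div_le_iff₀ hr0).1 h
    -- step 2 : split the power
    have hsplit1 : r ^ ((n:ℝ) + α + 1) = r ^ ((n:ℝ) + α) * r := by
      rw [Real.rpow_add hr0, Real.rpow_one]
    have hsplit2 : ((2:ℝ)^k*d) ^ ((n:ℝ) + α)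
        = (2^k*d)^(n-1) * (((2:ℝ)^((1:ℝ)+α))^k * d^((1:ℝ)+α)) := by
      have hcast : (n:ℝ) + α = ((n-1 : ℕ) : ℝ) + (1 + α) := by
        have : ((n-1 : ℕ) : ℝ) = (n:ℝ) - 1 := by
          have : 1 ≤ n := by omega
          push_cast [this]
          ring
        rw [this]; ring
      rw [hcast, Real.rpow_add hBpos, Real.rpow_natCast,
        Real.mul_rpow (by positivity) hd.le, pow2rpow]
    calc ω r / r ^ ((n:ℝ) + α + 1) ≤ ((ω d / d) * r) / r ^ ((n:ℝ) + α + 1) := by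
          exact div_le_div_of_nonneg_right hstep1 (by positivity)
      _ = (ω d / d) / r ^ ((n:ℝ) + α) := by
          rw [hsplit1, mul_div_mul_right _ _ hr0.ne']
      _ ≤ (ω d / d) / ((2:ℝ)^k*d) ^ ((n:ℝ) + α) := by
          exact div_le_div_of_nonneg_left (by positivity)
            (Real.rpow_pos_of_pos hBpos _)
            (Real.rpow_le_rpow hBpos.le hrk (by positivity))
      _ = ω d / d / ((2^k*d)^(n-1) * (((2:ℝ)^((1:ℝ)+α))^k * d^((1:ℝ)+α))) := by
          rw [hsplit2]
  -- per-annulus integral bound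
  have hannulus : ∀ k, ∫⁻ ζ in A k, ENNReal.ofReal
        (ω ‖x - (ζ : EuclideanSpace ℝ (Fin n))‖ /
          ‖x - (ζ : EuclideanSpace ℝ (Fin n))‖ ^ ((n : ℝ) + α + 1)) ∂(sphereMeasure n)
      ≤ ENNReal.ofReal ((8^n * ω d / d^((2:ℝ)+α)) * q^k) := by
    intro k
    have hck : (0:ℝ) ≤ ω d / d / ((2^k*d)^(n-1) * (((2:ℝ)^((1:ℝ)+α))^k * d^((1:ℝ)+α))) := by
      have hD : (0:ℝ) < d^((1:ℝ)+α) := Real.rpow_pos_of_pos hd _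
      positivity
    calc ∫⁻ ζ in A k, ENNReal.ofReal
          (ω ‖x - (ζ : EuclideanSpace ℝ (Fin n))‖ /
            ‖x - (ζ : EuclideanSpace ℝ (Fin n))‖ ^ ((n : ℝ) + α + 1)) ∂(sphereMeasure n)
        ≤ ∫⁻ _ in A k, ENNReal.ofReal (ω d / d /
            ((2^k*d)^(n-1) * (((2:ℝ)^((1:ℝ)+α))^k * d^((1:ℝ)+α)))) ∂(sphereMeasure n) :=
          setLIntegral_mono' (hAmeas k) (hptwise k)
      _ = ENNReal.ofReal (ω d / d /
            ((2^k*d)^(n-1) * (((2:ℝ)^((1:ℝ)+α))^k * d^((1:ℝ)+α)))) *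
            sphereMeasure n (A k) := setLIntegral_const _ _
      _ ≤ ENNReal.ofReal (ω d / d /
            ((2^k*d)^(n-1) * (((2:ℝ)^((1:ℝ)+α))^k * d^((1:ℝ)+α)))) *
            ENNReal.ofReal (4^n * ((2:ℝ)^(k+1)*d)^(n-1)) := by
          refine mul_le_mul_right ?_ _
          refine le_trans (measure_mono ?_) (sphereMeasure_cap n (by omega) x (by positivity))
          exact fun ζ hζ => hζ.2
      _ = ENNReal.ofReal ((ω d / d /
            ((2^k*d)^(n-1) * (((2:ℝ)^((1:ℝ)+α))^k * d^((1:ℝ)+α)))) *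
            (4^n * ((2:ℝ)^(k+1)*d)^(n-1))) := (ENNReal.ofReal_mul hck).symm
      _ ≤ ENNReal.ofReal ((8^n * ω d / d^((2:ℝ)+α)) * q^k) := by
          refine ENNReal.ofReal_le_ofReal ?_
          have := termIneq n k (by omega) α d (ω d) hα hd hwd
          simpa [hq_def] using this
  -- assemble
  have hB : (0:ℝ) ≤ 8^n * ω d / d^((2:ℝ)+α) := by
    have hD : (0:ℝ) < d^((2:ℝ)+α) := Real.rpow_pos_of_pos hd _
    positivity
  calc ∫⁻ ζ, ENNReal.ofReal
        (ω ‖x - (ζ : EuclideanSpace ℝ (Fin n))‖ /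
          ‖x - (ζ : EuclideanSpace ℝ (Fin n))‖ ^ ((n : ℝ) + α + 1)) ∂(sphereMeasure n)
      = ∫⁻ ζ in Set.univ, ENNReal.ofReal
        (ω ‖x - (ζ : EuclideanSpace ℝ (Fin n))‖ /
          ‖x - (ζ : EuclideanSpace ℝ (Fin n))‖ ^ ((n : ℝ) + α + 1)) ∂(sphereMeasure n) :=
        (setLIntegral_univ _).symm
    _ ≤ ∫⁻ ζ in ⋃ k, A k, ENNReal.ofReal
        (ω ‖x - (ζ : EuclideanSpace ℝ (Fin n))‖ /
          ‖x - (ζ : EuclideanSpace ℝ (Fin n))‖ ^ ((n : ℝ) + α + 1)) ∂(sphereMeasure n) :=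
        lintegral_mono_set hcover
    _ ≤ ∑' k, ∫⁻ ζ in A k, ENNReal.ofReal
        (ω ‖x - (ζ : EuclideanSpace ℝ (Fin n))‖ /
          ‖x - (ζ : EuclideanSpace ℝ (Fin n))‖ ^ ((n : ℝ) + α + 1)) ∂(sphereMeasure n) :=
        lintegral_iUnion_le _ _
    _ ≤ ∑' k, ENNReal.ofReal ((8^n * ω d / d^((2:ℝ)+α)) * q^k) :=
        ENNReal.tsum_le_tsum hannulus
    _ = ENNReal.ofReal (8^n * ω d / d^((2:ℝ)+α)) * ∑' k, (ENNReal.ofReal q)^k := by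
        rw [← ENNReal.tsum_mul_left]
        congr 1
        funext k
        rw [ENNReal.ofReal_mul hB, ENNReal.ofReal_pow hq0.le]
    _ = ENNReal.ofReal (8^n * ω d / d^((2:ℝ)+α)) * ENNReal.ofReal ((1-q)⁻¹) := by
        rw [ENNReal.tsum_geometric]
        congr 1
        rw [← ENNReal.ofReal_one, ← ENNReal.ofReal_sub 1 hq0.le,
          ENNReal.ofReal_inv_of_pos (by linarith)]
    _ = ENNReal.ofReal ((8^n * ω d / d^((2:ℝ)+α)) * (1-q)⁻¹) := by
        rw [← ENNReal.ofReal_mul hB]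
    _ ≤ ENNReal.ofReal (8^n * (1-q)⁻¹ * ω d / d ^ ((2:ℝ) + α)) := by
        refine ENNReal.ofReal_le_ofReal (le_of_eq ?_)
        ring
end

section
/- Let n ≥ 2 and let ω be a fast majorant. If u : B^n → ℝ is differentiable on the open unit ball B^n and there exists M₀ > 0 such that |∇u(x)| ≤ M₀ ω(1 − |x|)/(1 − |x|) for all x ∈ B^n, then u ∈ Λ_ω(B^n); that is, there exists M > 0 such that |u(x) − u(y)| ≤ M ω(|x − y|) for all x, y ∈ B^n. -/
open MeasureTheory Real Filter Metric

lemma fast_uniform (ω : ℝ → ℝ) (hω : IsFastMajorant ω) :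
    ∃ M₁ > (0:ℝ), ∀ s : ℝ, 0 < s → s ≤ 1 →
      ∫⁻ t in Set.Ioc (0:ℝ) s, ENNReal.ofReal (ω t / t) ≤ ENNReal.ofReal (M₁ * ω s) := by
  obtain ⟨⟨hcont, hmono, hω0, hnn, hanti⟩, lam₀, hlam₀, M, hM, hfast⟩ := hω
  set c : ℝ := lam₀ / 2 with hc
  have hc0 : 0 < c := by positivity
  refine ⟨M + 1 / c, by positivity, ?_⟩
  intro s hs0 hs1
  by_cases hsl : s < lam₀
  · refine (hfast s hs0 hsl).trans (ENNReal.ofReal_le_ofReal ?_)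
    have := hnn s hs0.le
    nlinarith [one_div_pos.mpr hc0]
  · push_neg at hsl
    have hcs : c ≤ s := by nlinarith
    have hsplit : Set.Ioc (0:ℝ) c ∪ Set.Ioc c s = Set.Ioc (0:ℝ) s :=
      Set.Ioc_union_Ioc_eq_Ioc hc0.le hcs
    have hωcs : ω c ≤ ω s := hmono (Set.mem_Ici.2 hc0.le) (Set.mem_Ici.2 hs0.le) hcs
    have h1 : ∫⁻ t in Set.Ioc (0:ℝ) c, ENNReal.ofReal (ω t / t) ≤ ENNReal.ofReal (M * ω s) := by
      refine (hfast c hc0 (by nlinarith)).trans (ENNReal.ofReal_le_ofReal ?_)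
      nlinarith
    have h2 : ∫⁻ t in Set.Ioc c s, ENNReal.ofReal (ω t / t)
        ≤ ENNReal.ofReal ((1 / c) * ω s) := by
      have hb : ∀ t ∈ Set.Ioc c s, ENNReal.ofReal (ω t / t) ≤ ENNReal.ofReal (ω c / c) := by
        intro t ht
        exact ENNReal.ofReal_le_ofReal
          (hanti (Set.mem_Ioi.2 hc0) (Set.mem_Ioi.2 (hc0.trans ht.1)) ht.1.le)
      calc ∫⁻ t in Set.Ioc c s, ENNReal.ofReal (ω t / t)
          ≤ ∫⁻ _ in Set.Ioc c s, ENNReal.ofReal (ω c / c) :=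
            setLIntegral_mono' measurableSet_Ioc hb
        _ = ENNReal.ofReal (ω c / c) * volume (Set.Ioc c s) := setLIntegral_const _ _
        _ = ENNReal.ofReal (ω c / c) * ENNReal.ofReal (s - c) := by
            rw [Real.volume_Ioc]
        _ = ENNReal.ofReal ((ω c / c) * (s - c)) := by
            rw [ENNReal.ofReal_mul (div_nonneg (hnn c hc0.le) hc0.le)]
        _ ≤ ENNReal.ofReal ((1 / c) * ω s) := by
            apply ENNReal.ofReal_le_ofReal
            calc ω c / c * (s - c) ≤ ω c / c * 1 :=
                  mul_le_mul_of_nonneg_left (by linarith)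
                    (div_nonneg (hnn c hc0.le) hc0.le)
              _ = ω c / c := mul_one _
              _ ≤ ω s / c := by gcongr
              _ = (1 / c) * ω s := by ring
    calc ∫⁻ t in Set.Ioc (0:ℝ) s, ENNReal.ofReal (ω t / t)
        = (∫⁻ t in Set.Ioc (0:ℝ) c, ENNReal.ofReal (ω t / t))
          + ∫⁻ t in Set.Ioc c s, ENNReal.ofReal (ω t / t) := by
          rw [← hsplit, lintegral_union measurableSet_Ioc
            (Set.Ioc_disjoint_Ioc.2 (le_max_of_le_right (min_le_left _ _)))]
      _ ≤ ENNReal.ofReal (M * ω s) + ENNReal.ofReal ((1 / c) * ω s) := add_le_add h1 h2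
      _ = ENNReal.ofReal ((M + 1 / c) * ω s) := by
          rw [← ENNReal.ofReal_add (mul_nonneg hM.le (hnn s hs0.le)) (mul_nonneg (by positivity) (hnn s hs0.le))]
          ring_nf

noncomputable def ballProj {n : ℕ} (ρ : ℝ) (x : EuclideanSpace ℝ (Fin n)) :
    EuclideanSpace ℝ (Fin n) := if ‖x‖ ≤ ρ then x else (ρ / ‖x‖) • x

lemma ballProj_norm_le {n : ℕ} (ρ : ℝ) (hρ : 0 ≤ ρ) (x : EuclideanSpace ℝ (Fin n)) :
    ‖ballProj ρ x‖ ≤ ρ := by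
  unfold ballProj
  split_ifs with h
  · exact h
  · push_neg at h
    have hx : 0 < ‖x‖ := lt_of_le_of_lt hρ h
    rw [norm_smul, Real.norm_eq_abs, abs_of_nonneg (div_nonneg hρ hx.le),
      div_mul_cancel₀ _ hx.ne']

lemma ballProj_nonexpansive {n : ℕ} (ρ : ℝ) (hρ : 0 ≤ ρ) (x y : EuclideanSpace ℝ (Fin n)) :
    ‖ballProj ρ x - ballProj ρ y‖ ≤ ‖x - y‖ := by
  have key : ∀ a b : EuclideanSpace ℝ (Fin n), ‖b‖ ≤ ρ → ρ < ‖a‖ →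
      ‖(ρ / ‖a‖) • a - b‖ ≤ ‖a - b‖ := by
    intro a b hb ha
    have ha0 : 0 < ‖a‖ := lt_of_le_of_lt hρ ha
    set s : ℝ := ρ / ‖a‖ with hs
    have hs0 : 0 ≤ s := div_nonneg hρ ha0.le
    have hs1 : s ≤ 1 := (div_le_one ha0).2 ha.le
    have hc : @inner ℝ _ _ a b ≤ s * ‖a‖ ^ 2 := by
      have h1 : @inner ℝ _ _ a b ≤ ‖a‖ * ‖b‖ := real_inner_le_norm a b
      have hsa : s * ‖a‖ = ρ := div_mul_cancel₀ _ ha0.ne'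
      nlinarith [hb, ha0]
    have hsq : ‖(s • a) - b‖ ^ 2 ≤ ‖a - b‖ ^ 2 := by
      rw [@norm_sub_sq_real, @norm_sub_sq_real, real_inner_smul_left, norm_smul,
        Real.norm_eq_abs, abs_of_nonneg hs0, mul_pow]
      nlinarith [mul_le_mul_of_nonneg_left hc (by linarith : (0:ℝ) ≤ 1 - s),
        mul_nonneg (sq_nonneg (1 - s)) (sq_nonneg ‖a‖)]
    nlinarith [norm_nonneg ((s • a) - b), norm_nonneg (a - b), hsq]
  have key2 : ∀ a b : EuclideanSpace ℝ (Fin n), ρ < ‖a‖ → ρ < ‖b‖ →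
      ‖(ρ / ‖a‖) • a - (ρ / ‖b‖) • b‖ ≤ ‖a - b‖ := by
    intro a b ha hb
    have ha0 : 0 < ‖a‖ := lt_of_le_of_lt hρ ha
    have hb0 : 0 < ‖b‖ := lt_of_le_of_lt hρ hb
    set s : ℝ := ρ / ‖a‖ with hs
    set t : ℝ := ρ / ‖b‖ with ht
    have hs0 : 0 ≤ s := div_nonneg hρ ha0.le
    have ht0 : 0 ≤ t := div_nonneg hρ hb0.le
    have hsa : s * ‖a‖ = ρ := div_mul_cancel₀ _ ha0.ne'
    have htb : t * ‖b‖ = ρ := div_mul_cancel₀ _ hb0.ne'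
    have hst : s * t * (‖a‖ * ‖b‖) = ρ ^ 2 := by
      calc s * t * (‖a‖ * ‖b‖) = (s * ‖a‖) * (t * ‖b‖) := by ring
        _ = ρ ^ 2 := by rw [hsa, htb]; ring
    have hst1 : s * t ≤ 1 := by
      have : s ≤ 1 := (div_le_one ha0).2 ha.le
      have : t ≤ 1 := (div_le_one hb0).2 hb.le
      nlinarith
    have hinner : @inner ℝ _ _ a b ≤ ‖a‖ * ‖b‖ := real_inner_le_norm a b
    have hmul : (1 - s * t) * (@inner ℝ _ _ a b) ≤ (1 - s * t) * (‖a‖ * ‖b‖) :=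
      mul_le_mul_of_nonneg_left hinner (by linarith)
    have hsq : ‖(s • a) - (t • b)‖ ^ 2 ≤ ‖a - b‖ ^ 2 := by
      rw [@norm_sub_sq_real, @norm_sub_sq_real, real_inner_smul_left, real_inner_smul_right,
        norm_smul, norm_smul, Real.norm_eq_abs, Real.norm_eq_abs, abs_of_nonneg hs0,
        abs_of_nonneg ht0, mul_pow, mul_pow]
      nlinarith [sq_nonneg (‖a‖ - ‖b‖), hst, hmul, sq_nonneg s, sq_nonneg t]
    nlinarith [norm_nonneg ((s • a) - (t • b)), norm_nonneg (a - b), hsq]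
  unfold ballProj
  split_ifs with h1 h2 h2
  · exact le_rfl |>.trans (le_of_eq rfl) |>.trans_eq rfl |>.trans le_rfl
  · push_neg at h2
    have := key y x h1 h2
    calc ‖x - (ρ / ‖y‖) • y‖ = ‖(ρ / ‖y‖) • y - x‖ := by rw [norm_sub_rev]
      _ ≤ ‖y - x‖ := this
      _ = ‖x - y‖ := norm_sub_rev _ _
  · push_neg at h1
    exact key x y h2 h1
  · push_neg at h1 h2
    exact key2 x y h1 h2

/-- **Lipschitz continuity from a gradient bound.** Let `n ≥ 2` and let `ω` be a fast
majorant. If `u` is differentiable on `B^n` and `|∇u(x)| ≤ M₀ ω(1−|x|)/(1−|x|)` on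
`B^n`, then `u ∈ Λ_ω(B^n)`. -/
theorem lipschitz_from_gradient_bound (n : ℕ) (hn : 2 ≤ n)
    (ω : ℝ → ℝ) (hω : IsFastMajorant ω) (u : EuclideanSpace ℝ (Fin n) → ℝ)
    (hu : DifferentiableOn ℝ u (Metric.ball (0 : EuclideanSpace ℝ (Fin n)) 1))
    (M₀ : ℝ) (hM₀ : 0 < M₀)
    (hgrad : ∀ x ∈ Metric.ball (0 : EuclideanSpace ℝ (Fin n)) 1,
      ‖gradient u x‖ ≤ M₀ * ω (1 - ‖x‖) / (1 - ‖x‖)) :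
    ∃ M > (0 : ℝ), ∀ x ∈ Metric.ball (0 : EuclideanSpace ℝ (Fin n)) 1,
      ∀ y ∈ Metric.ball (0 : EuclideanSpace ℝ (Fin n)) 1,
        |u x - u y| ≤ M * ω ‖x - y‖ := by
  obtain ⟨M₁, hM₁pos, hM₁⟩ := fast_uniform ω hω
  obtain ⟨⟨hcont, hmono, hω0, hnn, hanti⟩, -⟩ := hω
  have hgradnorm : ∀ z : EuclideanSpace ℝ (Fin n), ‖fderiv ℝ u z‖ = ‖gradient u z‖ := by
    intro z
    simp only [gradient, LinearIsometryEquiv.norm_map]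
  -- the radial estimate
  have hrad : ∀ (e : EuclideanSpace ℝ (Fin n)), ‖e‖ = 1 → ∀ ρ₁ ρ₂ : ℝ,
      0 ≤ ρ₁ → ρ₁ ≤ ρ₂ → ρ₂ < 1 →
      |u (ρ₂ • e) - u (ρ₁ • e)| ≤ M₀ * (M₁ * ω (1 - ρ₁)) := by
    intro e he ρ₁ ρ₂ hρ₁ h12 hρ₂
    have hnorm : ∀ r ∈ Set.Icc ρ₁ ρ₂, ‖r • e‖ = r := by
      intro r hr
      rw [norm_smul, he, mul_one, Real.norm_eq_abs, abs_of_nonneg (hρ₁.trans hr.1)]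
    have hmem : ∀ r ∈ Set.Icc ρ₁ ρ₂, r • e ∈ Metric.ball (0 : EuclideanSpace ℝ (Fin n)) 1 := by
      intro r hr
      rw [mem_ball_zero_iff, hnorm r hr]
      exact lt_of_le_of_lt hr.2 hρ₂
    set G' : ℝ → ℝ := fun r => (fderiv ℝ u (r • e)) e with hG'def
    have hderiv : ∀ r ∈ Set.Icc ρ₁ ρ₂, HasDerivAt (fun r : ℝ => u (r • e)) (G' r) r := by
      intro r hr
      have hdiff : DifferentiableAt ℝ u (r • e) :=
        (hu _ (hmem r hr)).differentiableAt (isOpen_ball.mem_nhds (hmem r hr))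
      have h2 : HasDerivAt (fun s : ℝ => s • e) ((1:ℝ) • e) r := (hasDerivAt_id r).smul_const e
      have h3 := hdiff.hasFDerivAt.comp_hasDerivAt r h2
      simp only [one_smul] at h3
      exact h3
    set φ : ℝ → ℝ := fun r => M₀ * ω (1 - r) / (1 - r) with hφdef
    have hφcont : ContinuousOn φ (Set.Icc ρ₁ ρ₂) := by
      apply ContinuousOn.div
      · apply continuousOn_const.mul
        apply hcont.comp (continuousOn_const.sub continuousOn_id)
        intro r hr
        exact Set.mem_Ici.2 (by linarith [hr.2, hρ₂.le] : (0:ℝ) ≤ 1 - r)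
      · exact continuousOn_const.sub continuousOn_id
      · intro r hr
        have h2 := hr.2
        exact ne_of_gt (by linarith : (0:ℝ) < 1 - r)
    have hφint : IntervalIntegrable φ volume ρ₁ ρ₂ := by
      apply ContinuousOn.intervalIntegrable
      rwa [Set.uIcc_of_le h12]
    have hGbound : ∀ r ∈ Set.Icc ρ₁ ρ₂, |G' r| ≤ φ r := by
      intro r hr
      have h1 : |G' r| ≤ ‖fderiv ℝ u (r • e)‖ * ‖e‖ := (fderiv ℝ u (r • e)).le_opNorm e
      rw [he, mul_one, hgradnorm] at h1
      refine h1.trans ?_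
      have h2 := hgrad _ (hmem r hr)
      rwa [hnorm r hr] at h2
    have hG'meas : Measurable G' :=
      (measurable_fderiv_apply_const ℝ u e).comp
        ((continuous_id.smul continuous_const).measurable)
    have hG'int : IntervalIntegrable G' volume ρ₁ ρ₂ := by
      apply hφint.mono_fun hG'meas.aestronglyMeasurable
      refine (ae_restrict_iff' measurableSet_uIoc).2 (ae_of_all _ ?_)
      intro r hr
      rw [Set.uIoc_of_le h12] at hr
      have hr' : r ∈ Set.Icc ρ₁ ρ₂ := ⟨hr.1.le, hr.2⟩
      simp only [Real.norm_eq_abs]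
      exact (hGbound r hr').trans (le_abs_self _)
    have hFTC : ∫ r in ρ₁..ρ₂, G' r = u (ρ₂ • e) - u (ρ₁ • e) :=
      intervalIntegral.integral_eq_sub_of_hasDerivAt
        (fun r hr => hderiv r (by rwa [Set.uIcc_of_le h12] at hr)) hG'int
    have habs : |u (ρ₂ • e) - u (ρ₁ • e)| ≤ |∫ r in ρ₁..ρ₂, φ r| := by
      rw [← hFTC, ← Real.norm_eq_abs]
      apply intervalIntegral.norm_integral_le_abs_of_norm_le ?_ hφint
      refine (ae_restrict_iff' measurableSet_uIoc).2 (ae_of_all _ ?_)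
      intro r hr
      rw [Set.uIoc_of_le h12] at hr
      rw [Real.norm_eq_abs]
      exact hGbound r ⟨hr.1.le, hr.2⟩
    -- change of variables
    have hchange : ∫ r in ρ₁..ρ₂, φ r = M₀ * ∫ t in (1-ρ₂)..(1-ρ₁), ω t / t := by
      have h1 : ∫ r in ρ₁..ρ₂, φ r = M₀ * ∫ r in ρ₁..ρ₂, ω (1-r) / (1-r) := by
        simp only [hφdef, mul_div_assoc]
        exact intervalIntegral.integral_const_mul _ _
      rw [h1, intervalIntegral.integral_comp_sub_left (fun t => ω t / t) 1]
    -- bound the integral ∫_{1-ρ₂}^{1-ρ₁} ω t / t dt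
    set s₁ : ℝ := 1 - ρ₂ with hs₁def
    set s₂ : ℝ := 1 - ρ₁ with hs₂def
    have hs₁0 : 0 < s₁ := by simp only [hs₁def]; linarith
    have hs12 : s₁ ≤ s₂ := by simp only [hs₁def, hs₂def]; linarith
    have hs₂1 : s₂ ≤ 1 := by simp only [hs₂def]; linarith
    have hs₂0 : 0 < s₂ := lt_of_lt_of_le hs₁0 hs12
    have hcontI : ContinuousOn (fun t => ω t / t) (Set.Icc s₁ s₂) := by
      apply ContinuousOn.div
      · exact hcont.mono (fun t ht => Set.mem_Ici.2 (hs₁0.le.trans ht.1))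
      · exact continuousOn_id
      · intro t ht
        exact ne_of_gt (lt_of_lt_of_le hs₁0 ht.1)
    have hintI : IntervalIntegrable (fun t => ω t / t) volume s₁ s₂ := by
      apply ContinuousOn.intervalIntegrable
      rwa [Set.uIcc_of_le hs12]
    have hJnonneg : 0 ≤ ∫ t in s₁..s₂, ω t / t := by
      apply intervalIntegral.integral_nonneg hs12
      intro t ht
      exact div_nonneg (hnn t (hs₁0.le.trans ht.1)) (hs₁0.le.trans ht.1)
    have hJle : (∫ t in s₁..s₂, ω t / t) ≤ M₁ * ω s₂ := by
      rw [intervalIntegral.integral_of_le hs12]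
      have hIntOn : IntegrableOn (fun t => ω t / t) (Set.Ioc s₁ s₂) volume :=
        (intervalIntegrable_iff_integrableOn_Ioc_of_le hs12).1 hintI
      have hnn' : 0 ≤ᵐ[volume.restrict (Set.Ioc s₁ s₂)] fun t => ω t / t := by
        refine (ae_restrict_iff' measurableSet_Ioc).2 (ae_of_all _ ?_)
        intro t ht
        exact div_nonneg (hnn t (hs₁0.trans ht.1).le) (hs₁0.trans ht.1).le
      have heq : ENNReal.ofReal (∫ t in Set.Ioc s₁ s₂, ω t / t)
          = ∫⁻ t in Set.Ioc s₁ s₂, ENNReal.ofReal (ω t / t) :=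
        ofReal_integral_eq_lintegral_ofReal hIntOn hnn'
      have hle2 : (∫⁻ t in Set.Ioc s₁ s₂, ENNReal.ofReal (ω t / t))
          ≤ ∫⁻ t in Set.Ioc (0:ℝ) s₂, ENNReal.ofReal (ω t / t) :=
        lintegral_mono_set (Set.Ioc_subset_Ioc_left hs₁0.le)
      have := heq.le.trans (hle2.trans (hM₁ s₂ hs₂0 hs₂1))
      exact (ENNReal.ofReal_le_ofReal_iff (mul_nonneg hM₁pos.le (hnn s₂ hs₂0.le))).1 this
    refine habs.trans ?_
    rw [hchange, abs_mul, abs_of_pos hM₀, abs_of_nonneg hJnonneg]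
    exact mul_le_mul_of_nonneg_left hJle hM₀.le
  -- main assembly
  refine ⟨2 * (M₀ * M₁) + M₀, by positivity, ?_⟩
  intro x hx y hy
  by_cases hd0 : ‖x - y‖ = 0
  · have hxy : x = y := by rwa [← sub_eq_zero, ← norm_eq_zero]
    simp [hxy, hω0]
  · set d : ℝ := ‖x - y‖ with hddef
    have hd : 0 < d := (norm_nonneg _).lt_of_ne (Ne.symm hd0)
    set ρ : ℝ := max 0 (1 - d) with hρdef
    have hρ0 : 0 ≤ ρ := le_max_left _ _
    have hρlt : ρ < 1 := max_lt_iff.2 ⟨one_pos, by linarith⟩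
    have h1ρ : 1 - ρ ≤ d := by
      rcases le_total 0 (1 - d) with h | h
      · rw [hρdef, max_eq_right h]; linarith
      · rw [hρdef, max_eq_left h]; linarith
    have h1ρpos : 0 < 1 - ρ := by linarith
    have hωd0 : 0 ≤ ω d := hnn d hd.le
    have hω1ρd : ω (1 - ρ) ≤ ω d :=
      hmono (Set.mem_Ici.2 h1ρpos.le) (Set.mem_Ici.2 hd.le) h1ρ
    have hradx : ∀ z : EuclideanSpace ℝ (Fin n), z ∈ Metric.ball (0:EuclideanSpace ℝ (Fin n)) 1 →
        |u z - u (ballProj ρ z)| ≤ M₀ * (M₁ * ω d) := by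
      intro z hz
      unfold ballProj
      split_ifs with h
      · simp only [sub_self, abs_zero]
        positivity
      · push_neg at h
        have hz0 : 0 < ‖z‖ := lt_of_le_of_lt hρ0 h
        have he : ‖(‖z‖⁻¹ • z : EuclideanSpace ℝ (Fin n))‖ = 1 := by
          rw [norm_smul, Real.norm_eq_abs, abs_of_nonneg (inv_nonneg.2 hz0.le),
            inv_mul_cancel₀ hz0.ne']
        have h2 := hrad (‖z‖⁻¹ • z) he ρ ‖z‖ hρ0 h.le (mem_ball_zero_iff.1 hz)
        rw [smul_smul, smul_smul, mul_inv_cancel₀ hz0.ne', one_smul] at h2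
        rw [show ρ * ‖z‖⁻¹ = ρ / ‖z‖ from (div_eq_mul_inv ρ ‖z‖).symm] at h2
        refine h2.trans ?_
        have : M₁ * ω (1 - ρ) ≤ M₁ * ω d := mul_le_mul_of_nonneg_left hω1ρd hM₁pos.le
        exact mul_le_mul_of_nonneg_left this hM₀.le
    have hmid : |u (ballProj ρ x) - u (ballProj ρ y)| ≤ M₀ * ω d := by
      by_cases hd1 : d < 1
      · have hρeq : 1 - ρ = d := by rw [hρdef, max_eq_right (by linarith)]; ring
        have hccb : ∀ z : EuclideanSpace ℝ (Fin n), z ∈ Metric.closedBall (0:EuclideanSpace ℝ (Fin n)) ρ →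
            z ∈ Metric.ball (0:EuclideanSpace ℝ (Fin n)) 1 := by
          intro z hz
          exact mem_ball_zero_iff.2 (lt_of_le_of_lt (mem_closedBall_zero_iff.1 hz) hρlt)
        have hdiffAt : ∀ z ∈ Metric.closedBall (0:EuclideanSpace ℝ (Fin n)) ρ,
            DifferentiableAt ℝ u z := fun z hz =>
          (hu _ (hccb z hz)).differentiableAt (isOpen_ball.mem_nhds (hccb z hz))
        have hC : ∀ z ∈ Metric.closedBall (0:EuclideanSpace ℝ (Fin n)) ρ,
            ‖fderiv ℝ u z‖ ≤ M₀ * ω d / d := by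
          intro z hz
          have hz1 : ‖z‖ ≤ ρ := mem_closedBall_zero_iff.1 hz
          have h3 : d ≤ 1 - ‖z‖ := by linarith
          have h4 : ω (1 - ‖z‖) / (1 - ‖z‖) ≤ ω d / d :=
            hanti (Set.mem_Ioi.2 hd) (Set.mem_Ioi.2 (by linarith)) h3
          rw [hgradnorm]
          refine (hgrad z (hccb z hz)).trans ?_
          rw [mul_div_assoc, mul_div_assoc]
          exact mul_le_mul_of_nonneg_left h4 hM₀.le
        have hPx : ballProj ρ x ∈ Metric.closedBall (0:EuclideanSpace ℝ (Fin n)) ρ :=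
          mem_closedBall_zero_iff.2 (ballProj_norm_le ρ hρ0 x)
        have hPy : ballProj ρ y ∈ Metric.closedBall (0:EuclideanSpace ℝ (Fin n)) ρ :=
          mem_closedBall_zero_iff.2 (ballProj_norm_le ρ hρ0 y)
        have hkey := (convex_closedBall (0:EuclideanSpace ℝ (Fin n)) ρ).norm_image_sub_le_of_norm_fderiv_le
          hdiffAt hC hPy hPx
        rw [Real.norm_eq_abs] at hkey
        refine hkey.trans ?_
        calc M₀ * ω d / d * ‖ballProj ρ x - ballProj ρ y‖
            ≤ M₀ * ω d / d * d := by
              apply mul_le_mul_of_nonneg_left ((ballProj_nonexpansive ρ hρ0 x y))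
              positivity
          _ = M₀ * ω d := by field_simp
      · push_neg at hd1
        have hρeq : ρ = 0 := max_eq_left (by linarith)
        have hPx0 : ballProj ρ x = 0 :=
          norm_le_zero_iff.1 ((ballProj_norm_le ρ hρ0 x).trans (le_of_eq hρeq))
        have hPy0 : ballProj ρ y = 0 :=
          norm_le_zero_iff.1 ((ballProj_norm_le ρ hρ0 y).trans (le_of_eq hρeq))
        rw [hPx0, hPy0, sub_self, abs_zero]
        exact mul_nonneg hM₀.le hωd0
    calc |u x - u y| ≤ |u x - u (ballProj ρ x)| + |u (ballProj ρ x) - u y| :=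
          abs_sub_le _ _ _
      _ ≤ |u x - u (ballProj ρ x)| + (|u (ballProj ρ x) - u (ballProj ρ y)|
            + |u (ballProj ρ y) - u y|) := by
          gcongr
          exact abs_sub_le _ _ _
      _ ≤ M₀ * (M₁ * ω d) + (M₀ * ω d + M₀ * (M₁ * ω d)) :=
          add_le_add (hradx x hx)
            (add_le_add hmid (by rw [abs_sub_comm]; exact hradx y hy))
      _ = (2 * (M₀ * M₁) + M₀) * ω d := by ring
end
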